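/- Let G = (V,E) be a finite connected graph with |V| = n ≥ 2 and let m ≥ 1. Construct the graph G' from G by adding, for each edge e = uv ∈ E, a set K_e of m new vertices forming a clique, and joining every vertex of K_e to both u and v. Fix F ⊆ E and assign weight 1 to every edge of F and to every newly added edge, and weight 0 to every edge of E∖F. Then the minimum weight of a spanning tree of G' equals m·|E| + c(E∖F) − 1, where c(E∖F) is the number of connected components of the spanning subgraph (V, E∖F) of G. -/

import Mathlib

open Classical SimpleGraph

/-- The total weight of (the edges of) a graph `T`, viewed as a candidate spanning tree. -/
noncomputable def treeWeight {V : Type*} [Finite V] (w : Sym2 V → ℝ) (T : SimpleGraph V) : ℝ :=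
  ∑ e ∈ T.edgeSet.toFinite.toFinset, w e

/-- `T` is a spanning tree of `G`: a subgraph of `G` (on the same vertex set) that is a tree. -/
def IsSpanningTree {V : Type*} (G T : SimpleGraph V) : Prop := T ≤ G ∧ T.IsTree

/-- The number of connected components of the spanning subgraph with edge set `H`. -/
noncomputable def numComponents {V : Type*} (H : Set (Sym2 V)) : ℕ :=
  Nat.card (SimpleGraph.fromEdgeSet H).ConnectedComponent

/-- The graph `G'` obtained from `G` by adding, for each edge `e` of `G`, a clique `K_e` of `m`
new vertices, each joined to both endpoints of `e`. -/
def augGraph {V : Type*} (G : SimpleGraph V) (m : ℕ) :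
    SimpleGraph (V ⊕ (G.edgeSet × Fin m)) where
  Adj a b :=
    match a, b with
    | Sum.inl u, Sum.inl v => G.Adj u v
    | Sum.inl u, Sum.inr p => u ∈ (p.1 : Sym2 V)
    | Sum.inr p, Sum.inl u => u ∈ (p.1 : Sym2 V)
    | Sum.inr p, Sum.inr q => p.1 = q.1 ∧ p.2 ≠ q.2
  symm := by
    constructor
    rintro (u | ⟨e, i⟩) (v | ⟨f, j⟩) h
    · exact h.symm
    · exact h
    · exact h
    · exact ⟨h.1.symm, h.2.symm⟩
  loopless := by
    constructor
    rintro (u | ⟨e, i⟩) h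
    · exact h.ne rfl
    · exact h.2 rfl

/-- The weight function on `G'` induced by an edge set `F ⊆ E(G)`: original edges outside `F`
get weight `0`, while all edges of `F` and all newly added edges get weight `1`. -/
noncomputable def augWeight {V : Type*} (G : SimpleGraph V) (m : ℕ) (F : Set (Sym2 V)) :
    Sym2 (V ⊕ (G.edgeSet × Fin m)) → ℝ :=
  fun e => if e ∈ Sym2.map Sum.inl '' (G.edgeSet \ F) then 0 else 1


section Helpers2

variable {W : Type*}

lemma isAcyclic_mono {A B : SimpleGraph W} (h : B ≤ A) (hA : A.IsAcyclic) : B.IsAcyclic :=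
  fun _ c hc => hA (c.mapLe h) (hc.mapLe h)

lemma eq_of_reachable {A : SimpleGraph W} {β : Sort*} {f : W → β}
    (h : ∀ u v, A.Adj u v → f u = f v) {x y : W} (r : A.Reachable x y) : f x = f y := by
  obtain ⟨p⟩ := r
  induction p with
  | nil => rfl
  | cons ha _ ih => exact (h _ _ ha).trans ih

lemma reachable_of_adj_reachable {A H : SimpleGraph W}
    (h : ∀ u v, H.Adj u v → A.Reachable u v) {x y : W} (r : H.Reachable x y) :
    A.Reachable x y := by
  obtain ⟨p⟩ := r
  induction p with
  | nil => exact Reachable.refl _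
  | cons ha _ ih => exact (h _ _ ha).trans ih

lemma reachable_sup_edge {A : SimpleGraph W} {u v x y : W}
    (r : (A ⊔ fromEdgeSet {s(u,v)}).Reachable x y) :
    A.Reachable x y ∨ (A.Reachable x u ∧ A.Reachable v y) ∨
      (A.Reachable x v ∧ A.Reachable u y) := by
  obtain ⟨p⟩ := r
  induction p with
  | nil => exact Or.inl (Reachable.refl _)
  | @cons a b c ha p ih =>
    rcases ha with ha | ha
    · rcases ih with h | ⟨h1, h2⟩ | ⟨h1, h2⟩
      · exact Or.inl (ha.reachable.trans h)
      · exact Or.inr (Or.inl ⟨ha.reachable.trans h1, h2⟩)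
      · exact Or.inr (Or.inr ⟨ha.reachable.trans h1, h2⟩)
    · rw [fromEdgeSet_adj] at ha
      have hab : s(a,b) = s(u,v) := ha.1
      rw [Sym2.eq_iff] at hab
      rcases hab with ⟨rfl, rfl⟩ | ⟨rfl, rfl⟩
      · rcases ih with h | ⟨h1, h2⟩ | ⟨h1, h2⟩
        · exact Or.inr (Or.inl ⟨Reachable.refl _, h⟩)
        · exact Or.inr (Or.inl ⟨Reachable.refl _, h2⟩)
        · exact Or.inl h2
      · rcases ih with h | ⟨h1, h2⟩ | ⟨h1, h2⟩
        · exact Or.inr (Or.inr ⟨Reachable.refl _, h⟩)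
        · exact Or.inl h2
        · exact Or.inr (Or.inr ⟨Reachable.refl _, h2⟩)

lemma sup_edge_sdiff_le {A : SimpleGraph W} {u v : W} :
    (A ⊔ fromEdgeSet {s(u,v)}) \ fromEdgeSet {s(u,v)} ≤ A := by
  intro x y h
  rw [sdiff_adj] at h
  obtain ⟨h1 | h1, h2⟩ := h
  · exact h1
  · exact absurd h1 h2

lemma isAcyclic_sup_edge {A : SimpleGraph W} {u v : W} (hA : A.IsAcyclic)
    (hne : u ≠ v) (hr : ¬ A.Reachable u v) :
    (A ⊔ fromEdgeSet {s(u,v)}).IsAcyclic := by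
  intro x c hc
  by_cases he : s(u,v) ∈ c.edges
  · have hadj : (A ⊔ fromEdgeSet {s(u,v)}).Adj u v := by
      right; rw [fromEdgeSet_adj]; exact ⟨rfl, hne⟩
    have hnb : ¬ (A ⊔ fromEdgeSet {s(u,v)}).IsBridge s(u,v) := by
      rw [isBridge_iff_adj_and_forall_cycle_notMem ((mem_edgeSet _).mpr hadj)]
      push_neg
      exact ⟨x, c, hc, he⟩
    rw [isBridge_iff] at hnb
    push_neg at hnb
    exact hr (hnb.mono sup_edge_sdiff_le)
  · have hedges : ∀ e ∈ c.edges, e ∈ A.edgeSet := by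
      intro e hec
      have hB := c.edges_subset_edgeSet hec
      rw [edgeSet_sup, edgeSet_fromEdgeSet] at hB
      rcases hB with hB | hB
      · exact hB
      · exact absurd (hB.1 : e ∈ ({s(u,v)} : Set (Sym2 W))) (by
          intro h'
          exact he (h' ▸ hec))
    exact hA (c.transfer A hedges) (hc.transfer hedges)

lemma card_cc_le_of_le [Finite W] {A B : SimpleGraph W} (h : A ≤ B) :
    Nat.card B.ConnectedComponent ≤ Nat.card A.ConnectedComponent :=
  Nat.card_le_card_of_surjective
    (ConnectedComponent.map (Hom.ofLE h))
    (fun c => c.ind (fun v => ⟨A.connectedComponentMk v, rfl⟩))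

lemma card_cc_eq_of_adj_reachable {A B : SimpleGraph W} (hle : A ≤ B)
    (h : ∀ u v, B.Adj u v → A.Reachable u v) :
    Nat.card A.ConnectedComponent = Nat.card B.ConnectedComponent := by
  apply Nat.card_eq_of_bijective (ConnectedComponent.map (Hom.ofLE hle))
  constructor
  · intro c d
    refine ConnectedComponent.ind₂ (fun x y hxy => ?_) c d
    have : B.Reachable x y := ConnectedComponent.exact hxy
    exact ConnectedComponent.sound (reachable_of_adj_reachable h this)
  · exact fun c => c.ind (fun v => ⟨A.connectedComponentMk v, rfl⟩)

lemma card_cc_bot : Nat.card (⊥ : SimpleGraph W).ConnectedComponent = Nat.card W := by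
  refine (Nat.card_eq_of_bijective ((⊥ : SimpleGraph W).connectedComponentMk) ⟨?_, ?_⟩).symm
  · intro x y h
    exact reachable_bot.mp (ConnectedComponent.exact h)
  · exact fun c => c.ind (fun v => ⟨v, rfl⟩)



lemma card_cc_sup_edge [Finite W] {A : SimpleGraph W} {u v : W} (hne : u ≠ v)
    (hr : ¬ A.Reachable u v) :
    Nat.card (A ⊔ fromEdgeSet {s(u,v)}).ConnectedComponent + 1
      = Nat.card A.ConnectedComponent := by
  classical
  set B := A ⊔ fromEdgeSet {s(u,v)} with hB
  haveI : Fintype A.ConnectedComponent := Fintype.ofFinite _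
  haveI : Fintype B.ConnectedComponent := Fintype.ofFinite _
  set φ : A.ConnectedComponent → B.ConnectedComponent :=
    ConnectedComponent.map (Hom.ofLE le_sup_left) with hφ
  have hφmk : ∀ x : W, φ (A.connectedComponentMk x) = B.connectedComponentMk x :=
    fun x => rfl
  set cu := A.connectedComponentMk u with hcu
  set cv := A.connectedComponentMk v with hcv
  have hucv : cu ≠ cv := fun h => hr (ConnectedComponent.exact h)
  have key : ∀ c d : A.ConnectedComponent,
      φ c = φ d ↔ c = d ∨ (c = cu ∧ d = cv) ∨ (c = cv ∧ d = cu) := by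
    refine ConnectedComponent.ind₂ (fun x y => ?_)
    constructor
    · intro h
      have hre : B.Reachable x y := ConnectedComponent.exact h
      rcases reachable_sup_edge hre with h' | ⟨h1, h2⟩ | ⟨h1, h2⟩
      · exact Or.inl (ConnectedComponent.sound h')
      · exact Or.inr (Or.inl ⟨ConnectedComponent.sound h1, (ConnectedComponent.sound h2).symm⟩)
      · exact Or.inr (Or.inr ⟨ConnectedComponent.sound h1, (ConnectedComponent.sound h2).symm⟩)
    · intro h
      have badj : B.Adj u v := by
        right; rw [fromEdgeSet_adj]; exact ⟨rfl, hne⟩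
      have huv : φ cu = φ cv := ConnectedComponent.sound badj.reachable
      rcases h with h | ⟨h1, h2⟩ | ⟨h1, h2⟩
      · rw [h]
      · rw [h1, h2]; exact huv
      · rw [h1, h2]; exact huv.symm
  have hsurj : Function.Surjective φ := fun c => c.ind (fun x => ⟨A.connectedComponentMk x, rfl⟩)
  have fiber : ∀ x : B.ConnectedComponent,
      (Finset.univ.filter (fun c => φ c = x)).card = if x = φ cu then 2 else 1 := by
    intro x
    by_cases hx : x = φ cu
    · subst hx
      rw [if_pos rfl]
      have : (Finset.univ.filter (fun c => φ c = φ cu)) = {cu, cv} := by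
        ext c
        simp only [Finset.mem_filter, Finset.mem_univ, true_and, Finset.mem_insert,
          Finset.mem_singleton]
        rw [key c cu]
        constructor
        · rintro (h | ⟨h1, h2⟩ | ⟨h1, h2⟩)
          · exact Or.inl h
          · exact Or.inl h1
          · exact Or.inr h1
        · rintro (rfl | rfl)
          · exact Or.inl rfl
          · exact Or.inr (Or.inr ⟨rfl, rfl⟩)
      rw [this, Finset.card_insert_of_notMem (by simpa using hucv), Finset.card_singleton]
    · rw [if_neg hx]
      obtain ⟨c0, rfl⟩ := hsurj x
      have : (Finset.univ.filter (fun c => φ c = φ c0)) = {c0} := by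
        ext c
        simp only [Finset.mem_filter, Finset.mem_univ, true_and, Finset.mem_singleton]
        constructor
        · intro h
          rcases (key c c0).mp h with h' | ⟨h1, h2⟩ | ⟨h1, h2⟩
          · exact h'
          · exact absurd (by rw [h2] : φ c0 = φ cv) (by
              intro hh
              apply hx
              rw [hh]
              exact (key cv cu).mpr (Or.inr (Or.inr ⟨rfl, rfl⟩)))
          · exact absurd (by rw [h2] : φ c0 = φ cu) hx
        · rintro rfl; rfl
      rw [this, Finset.card_singleton]
  have hcards : Nat.card A.ConnectedComponent
      = ∑ x : B.ConnectedComponent, (if x = φ cu then 2 else 1) := by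
    rw [Nat.card_eq_fintype_card, ← Finset.card_univ,
      Finset.card_eq_sum_card_fiberwise (f := φ) (t := Finset.univ) (fun c _ => Finset.mem_univ _)]
    exact Finset.sum_congr rfl (fun x _ => fiber x)
  have : ∑ x : B.ConnectedComponent, (if x = φ cu then 2 else 1)
      = Fintype.card B.ConnectedComponent + 1 := by
    have : ∀ x : B.ConnectedComponent, (if x = φ cu then 2 else 1)
        = 1 + (if x = φ cu then 1 else 0) := by
      intro x; by_cases h : x = φ cu <;> simp [h]
    rw [Finset.sum_congr rfl (fun x _ => this x), Finset.sum_add_distrib]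
    simp [Finset.card_univ, Nat.add_comm]
  rw [hcards, this, Nat.card_eq_fintype_card]

lemma forest_formula [Finite W] {A : SimpleGraph W} (hA : A.IsAcyclic) :
    Nat.card A.edgeSet + Nat.card A.ConnectedComponent = Nat.card W := by
  generalize hn : A.edgeSet.ncard = n
  induction n using Nat.strong_induction_on generalizing A with
  | _ n ih =>
    rcases Set.eq_empty_or_nonempty A.edgeSet with hemp | ⟨e, he⟩
    · have : A = ⊥ := edgeSet_eq_empty.mp hemp
      subst this
      rw [edgeSet_bot]
      simp [card_cc_bot]
    · induction e using Sym2.ind with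
      | _ u v =>
        have huv : A.Adj u v := (mem_edgeSet _).mp he
        have hne : u ≠ v := huv.ne
        set A' := A \ fromEdgeSet {s(u,v)} with hA'
        have hEle : fromEdgeSet {s(u,v)} ≤ A := by
          rw [← edgeSet_subset_edgeSet, edgeSet_fromEdgeSet]
          intro e' he'
          rcases he' with ⟨h1, _⟩
          rwa [Set.mem_singleton_iff.mp h1]
        have hsplit : A' ⊔ fromEdgeSet {s(u,v)} = A := sdiff_sup_cancel hEle
        have hA'le : A' ≤ A := sdiff_le
        have hA'ac : A'.IsAcyclic := isAcyclic_mono hA'le hA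
        have hbridge : ¬ A'.Reachable u v := by
          have := (isAcyclic_iff_forall_adj_isBridge.mp hA) huv
          rw [isBridge_iff] at this
          exact this
        have hedge : A'.edgeSet = A.edgeSet \ {s(u,v)} := by
          rw [hA']
          rw [edgeSet_sdiff, edgeSet_fromEdgeSet]
          ext e'
          simp only [Set.mem_diff, Set.mem_singleton_iff, Set.mem_setOf_eq]
          constructor
          · rintro ⟨h1, h2⟩
            refine ⟨h1, fun h => h2 ⟨h, ?_⟩⟩
            subst h
            exact fun hd => hne (by simpa using hd)
          · rintro ⟨h1, h2⟩
            exact ⟨h1, fun hh => h2 hh.1⟩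
        have hfin : A.edgeSet.Finite := Set.toFinite _
        have hn1 : A'.edgeSet.ncard + 1 = n := by
          rw [hedge, ← hn]
          exact Set.ncard_diff_singleton_add_one he hfin
        have hlt : A'.edgeSet.ncard < n := by omega
        have hih := ih _ hlt hA'ac rfl
        have hcc : Nat.card (A' ⊔ fromEdgeSet {s(u,v)}).ConnectedComponent + 1
            = Nat.card A'.ConnectedComponent := card_cc_sup_edge hne hbridge
        rw [hsplit] at hcc
        have hcardE : Nat.card A.edgeSet = n := by
          rw [Nat.card_coe_set_eq]; exact hn
        have hcardE' : Nat.card A'.edgeSet = A'.edgeSet.ncard := Nat.card_coe_set_eq _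
        omega

lemma exists_max_forest [Finite W] (H A₀ : SimpleGraph W) (h₀ : A₀ ≤ H)
    (hac : A₀.IsAcyclic) :
    ∃ A, A₀ ≤ A ∧ A ≤ H ∧ A.IsAcyclic ∧ ∀ u v, H.Adj u v → A.Reachable u v := by
  have hfin : (Set.univ : Set (SimpleGraph W)).Finite := Set.finite_univ
  set S : Set (SimpleGraph W) := {A | A₀ ≤ A ∧ A ≤ H ∧ A.IsAcyclic} with hS
  have hSfin : S.Finite := Set.Finite.subset hfin (Set.subset_univ _)
  have hSne : S.Nonempty := ⟨A₀, le_refl _, h₀, hac⟩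
  obtain ⟨A, hAS, hmax⟩ := Set.Finite.exists_maximalFor id S hSfin hSne
  obtain ⟨hA0, hAH, hAac⟩ := hAS
  refine ⟨A, hA0, hAH, hAac, fun u v hadj => ?_⟩
  by_contra hr
  have hne : u ≠ v := hadj.ne
  set B := A ⊔ fromEdgeSet {s(u,v)} with hB
  have hBS : B ∈ S := by
    refine ⟨le_trans hA0 le_sup_left, sup_le hAH ?_, isAcyclic_sup_edge hAac hne hr⟩
    rw [← edgeSet_subset_edgeSet, edgeSet_fromEdgeSet]
    intro e' he'
    rcases he' with ⟨h1, _⟩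
    rw [Set.mem_singleton_iff.mp h1]
    exact (mem_edgeSet _).mpr hadj
  have hAB : A ≤ B := le_sup_left
  have : A = B := le_antisymm hAB (hmax hBS hAB)
  have : A.Adj u v := by
    rw [this]
    right
    rw [fromEdgeSet_adj]
    exact ⟨rfl, hne⟩
  exact hr this.reachable

-- tree edge count in Nat.card form
lemma tree_card_edges [Finite W] {T : SimpleGraph W} (ht : T.IsTree) :
    Nat.card T.edgeSet + 1 = Nat.card W := by
  haveI : Fintype W := Fintype.ofFinite W
  haveI : Fintype T.edgeSet := Fintype.ofFinite _
  have := ht.card_edgeFinset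
  rwa [edgeFinset_card, ← Nat.card_eq_fintype_card, ← Nat.card_eq_fintype_card] at this

lemma key_lower [Finite W] {H T : SimpleGraph W} {Z : Set (Sym2 W)}
    (hT : T ≤ H) (ht : T.IsTree) :
    Nat.card (fromEdgeSet Z).ConnectedComponent ≤ Nat.card ↥(T.edgeSet \ Z) + 1 := by
  set A := fromEdgeSet (T.edgeSet ∩ Z) with hA
  have hAT : A ≤ T := by
    rw [hA, ← edgeSet_subset_edgeSet, edgeSet_fromEdgeSet]
    exact fun e he => he.1.1
  have hAac : A.IsAcyclic := isAcyclic_mono hAT ht.2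
  have hAZ : A ≤ fromEdgeSet Z := fromEdgeSet_mono (Set.inter_subset_right)
  have hFF := forest_formula hAac
  have hccle : Nat.card (fromEdgeSet Z).ConnectedComponent
      ≤ Nat.card A.ConnectedComponent := card_cc_le_of_le hAZ
  have hAedge : A.edgeSet = T.edgeSet ∩ Z := by
    rw [hA, edgeSet_fromEdgeSet]
    ext e
    simp only [Set.mem_diff, Set.mem_setOf_eq, Set.mem_inter_iff]
    exact ⟨fun h => h.1, fun h => ⟨h, fun hd => T.not_isDiag_of_mem_edgeSet h.1 hd⟩⟩
  have hTcard := tree_card_edges ht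
  have hsplit : (T.edgeSet ∩ Z).ncard + (T.edgeSet \ Z).ncard = T.edgeSet.ncard :=
    Set.ncard_inter_add_ncard_diff_eq_ncard T.edgeSet Z (Set.toFinite _)
  have h1 : Nat.card A.edgeSet = (T.edgeSet ∩ Z).ncard := by
    rw [hAedge, Nat.card_coe_set_eq]
  have h2 : Nat.card ↥(T.edgeSet \ Z) = (T.edgeSet \ Z).ncard := Nat.card_coe_set_eq _
  have h3 : Nat.card T.edgeSet = T.edgeSet.ncard := Nat.card_coe_set_eq _
  omega

lemma key_upper [Finite W] {H : SimpleGraph W} (hH : H.Connected) {Z : Set (Sym2 W)}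
    (hZ : Z ⊆ H.edgeSet) :
    ∃ T, T ≤ H ∧ T.IsTree ∧
      Nat.card ↥(T.edgeSet \ Z) + 1 = Nat.card (fromEdgeSet Z).ConnectedComponent := by
  have hZH : fromEdgeSet Z ≤ H := by
    rw [← edgeSet_subset_edgeSet, edgeSet_fromEdgeSet]
    exact fun e he => hZ he.1
  obtain ⟨A₁, _, hA₁Z, hA₁ac, hA₁r⟩ :=
    exists_max_forest (fromEdgeSet Z) ⊥ bot_le isAcyclic_bot
  obtain ⟨T, hA₁T, hTH, hTac, hTr⟩ := exists_max_forest H A₁ (le_trans hA₁Z hZH) hA₁ac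
  have hTconn : T.Connected := by
    rw [connected_iff]
    refine ⟨fun x y => ?_, hH.nonempty⟩
    exact reachable_of_adj_reachable hTr (hH.preconnected x y)
  have ht : T.IsTree := ⟨hTconn, hTac⟩
  refine ⟨T, hTH, ht, ?_⟩
  -- counting
  have hle := key_lower (Z := Z) hTH ht
  have hccA₁ : Nat.card A₁.ConnectedComponent
      = Nat.card (fromEdgeSet Z).ConnectedComponent :=
    card_cc_eq_of_adj_reachable hA₁Z hA₁r
  have hFF := forest_formula hA₁ac
  have hTcard := tree_card_edges ht
  have hsub : A₁.edgeSet ⊆ T.edgeSet ∩ Z := by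
    intro e he
    exact ⟨edgeSet_subset_edgeSet.mpr hA₁T he,
      (edgeSet_fromEdgeSet Z ▸ edgeSet_subset_edgeSet.mpr hA₁Z he).1⟩
  have hcard_sub : A₁.edgeSet.ncard ≤ (T.edgeSet ∩ Z).ncard :=
    Set.ncard_le_ncard hsub (Set.toFinite _)
  have hsplit : (T.edgeSet ∩ Z).ncard + (T.edgeSet \ Z).ncard = T.edgeSet.ncard :=
    Set.ncard_inter_add_ncard_diff_eq_ncard T.edgeSet Z (Set.toFinite _)
  have h1 : Nat.card A₁.edgeSet = A₁.edgeSet.ncard := Nat.card_coe_set_eq _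
  have h2 : Nat.card ↥(T.edgeSet \ Z) = (T.edgeSet \ Z).ncard := Nat.card_coe_set_eq _
  have h3 : Nat.card T.edgeSet = T.edgeSet.ncard := Nat.card_coe_set_eq _
  omega

end Helpers2

section Wt
variable {X : Type*} [Finite X]

lemma weight_eq (Z : Set (Sym2 X)) (T : SimpleGraph X) :
    treeWeight (fun e => if e ∈ Z then (0:ℝ) else 1) T
      = (Nat.card ↥(T.edgeSet \ Z) : ℝ) := by
  classical
  rw [treeWeight]
  have h1 : ∀ e ∈ T.edgeSet.toFinite.toFinset,
      (if e ∈ Z then (0:ℝ) else 1) = (if e ∉ Z then (1:ℝ) else 0) := by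
    intro e _
    by_cases h : e ∈ Z <;> simp [h]
  rw [Finset.sum_congr rfl h1, Finset.sum_boole]
  have h2 : (T.edgeSet.toFinite.toFinset.filter (fun e => e ∉ Z))
      = (T.edgeSet \ Z).toFinite.toFinset := by
    ext e
    simp [Set.Finite.mem_toFinset, Set.mem_diff]
  rw [h2]
  rw [Nat.card_coe_set_eq, Set.ncard_eq_toFinset_card _ (Set.toFinite _)]

end Wt

section App

variable {V : Type*} [Fintype V] (G : SimpleGraph V) (m : ℕ) (F : Set (Sym2 V))

local notation "W" => V ⊕ (G.edgeSet × Fin m)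
local notation "Z'" => Sym2.map Sum.inl '' (G.edgeSet \ F)

omit [Fintype V] in
lemma hZE : (Z' : Set (Sym2 W)) ⊆ (augGraph G m).edgeSet := by
  rintro e' ⟨e, he, rfl⟩
  induction e using Sym2.ind with
  | _ x y =>
    rw [Sym2.map_pair_eq]
    exact (SimpleGraph.mem_edgeSet _).mpr ((SimpleGraph.mem_edgeSet _).mp he.1)

omit [Fintype V] in
lemma aug_connected (hG : G.Connected) : (augGraph G m).Connected := by
  rw [connected_iff]
  have hne : Nonempty V := hG.nonempty
  refine ⟨?_, ⟨Sum.inl hne.some⟩⟩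
  have hinl : ∀ u v : V, (augGraph G m).Reachable (Sum.inl u) (Sum.inl v) := by
    intro u v
    exact Reachable.map (⟨Sum.inl, fun h => h⟩ : G →g augGraph G m) (hG.preconnected u v)
  have hto : ∀ a : W, ∃ u : V, (augGraph G m).Reachable a (Sum.inl u) := by
    rintro (u | ⟨e, i⟩)
    · exact ⟨u, Reachable.refl _⟩
    · refine ⟨(e : Sym2 V).out.1, Adj.reachable ?_⟩
      show (e : Sym2 V).out.1 ∈ (e : Sym2 V)
      exact Sym2.out_fst_mem _
  intro a b
  obtain ⟨u, hu⟩ := hto a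
  obtain ⟨v, hv⟩ := hto b
  exact hu.trans ((hinl u v).trans hv.symm)

lemma card_cc_Z' :
    Nat.card (SimpleGraph.fromEdgeSet (Z' : Set (Sym2 W))).ConnectedComponent
      = numComponents (G.edgeSet \ F) + Nat.card G.edgeSet * m := by
  set B := SimpleGraph.fromEdgeSet (G.edgeSet \ F) with hB
  have hadj : ∀ a b : W, (SimpleGraph.fromEdgeSet (Z' : Set (Sym2 W))).Adj a b →
      Sum.map B.connectedComponentMk (id : G.edgeSet × Fin m → G.edgeSet × Fin m) a
        = Sum.map B.connectedComponentMk id b := by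
    intro a b hab
    rw [fromEdgeSet_adj] at hab
    obtain ⟨⟨e, he, heq⟩, hne⟩ := hab
    induction e using Sym2.ind with
    | _ x y =>
      rw [Sym2.map_pair_eq, Sym2.eq_iff] at heq
      have hmk : B.connectedComponentMk x = B.connectedComponentMk y := by
        apply ConnectedComponent.connectedComponentMk_eq_of_adj
        rw [hB, fromEdgeSet_adj]
        refine ⟨he, fun hxy => hne ?_⟩
        rcases heq with ⟨ha, hb⟩ | ⟨ha, hb⟩ <;> rw [← ha, ← hb, hxy]
      rcases heq with ⟨ha, hb⟩ | ⟨ha, hb⟩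
      · rw [← ha, ← hb]; exact congrArg Sum.inl hmk
      · rw [← ha, ← hb]; exact congrArg Sum.inl hmk.symm
  have hadj2 : ∀ x y : V, B.Adj x y →
      (SimpleGraph.fromEdgeSet (Z' : Set (Sym2 W))).connectedComponentMk (Sum.inl x)
        = (SimpleGraph.fromEdgeSet (Z' : Set (Sym2 W))).connectedComponentMk (Sum.inl y) := by
    intro x y hxy
    rw [hB, fromEdgeSet_adj] at hxy
    apply ConnectedComponent.connectedComponentMk_eq_of_adj
    rw [fromEdgeSet_adj]
    refine ⟨⟨s(x, y), hxy.1, Sym2.map_pair_eq _ _ _⟩, fun h => hxy.2 ?_⟩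
    injection h
  have hequiv : (SimpleGraph.fromEdgeSet (Z' : Set (Sym2 W))).ConnectedComponent
      ≃ B.ConnectedComponent ⊕ (G.edgeSet × Fin m) :=
    ⟨Quot.lift (Sum.map B.connectedComponentMk id) (fun _ _ r => eq_of_reachable hadj r),
     Sum.elim
       (Quot.lift (fun u => (SimpleGraph.fromEdgeSet (Z' : Set (Sym2 W))).connectedComponentMk
           (Sum.inl u))
         (fun _ _ r => eq_of_reachable hadj2 r))
       (fun p => (SimpleGraph.fromEdgeSet (Z' : Set (Sym2 W))).connectedComponentMk (Sum.inr p)),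
     fun c => ConnectedComponent.ind (fun a => by rcases a with u | p <;> rfl) c,
     fun b => by
       rcases b with c | p
       · exact ConnectedComponent.ind (fun u => rfl) c
       · rfl⟩
  rw [Nat.card_congr hequiv, Nat.card_sum, Nat.card_prod, Nat.card_eq_fintype_card (α := Fin m),
    Fintype.card_fin]
  rfl

end App

/-- With the `augWeight` weights induced by `F ⊆ E(G)`, the minimum weight of a spanning tree
of `G'` is exactly `m·|E| + c(E \ F) - 1`. -/
theorem augGraph_mst_weight {V : Type*} [Fintype V] (G : SimpleGraph V) (hG : G.Connected)
    (hV : 2 ≤ Fintype.card V) (m : ℕ) (hm : 1 ≤ m) (F : Set (Sym2 V)) (hF : F ⊆ G.edgeSet) :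
    IsLeast {x : ℝ | ∃ T, IsSpanningTree (augGraph G m) T ∧ x = treeWeight (augWeight G m F) T}
      ((m : ℝ) * Nat.card G.edgeSet + numComponents (G.edgeSet \ F) - 1) := by
  classical
  set Z' : Set (Sym2 (V ⊕ (G.edgeSet × Fin m))) := Sym2.map Sum.inl '' (G.edgeSet \ F)
    with hZ'def
  have hconn : (augGraph G m).Connected := aug_connected G m hG
  have hZE' : Z' ⊆ (augGraph G m).edgeSet := hZE G m F
  have hKeq : Nat.card (SimpleGraph.fromEdgeSet Z').ConnectedComponent
      = numComponents (G.edgeSet \ F) + Nat.card G.edgeSet * m := card_cc_Z' G m F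
  have hKR : (Nat.card (SimpleGraph.fromEdgeSet Z').ConnectedComponent : ℝ)
      = (m : ℝ) * Nat.card G.edgeSet + numComponents (G.edgeSet \ F) := by
    rw [hKeq]; push_cast; ring
  have hwt : ∀ T : SimpleGraph (V ⊕ (G.edgeSet × Fin m)),
      treeWeight (augWeight G m F) T = (Nat.card ↥(T.edgeSet \ Z') : ℝ) :=
    fun T => weight_eq Z' T
  constructor
  · obtain ⟨T, hTH, ht, hcount⟩ := key_upper hconn hZE'
    refine ⟨T, ⟨hTH, ht⟩, ?_⟩
    rw [hwt T]
    have hc : (Nat.card ↥(T.edgeSet \ Z') : ℝ) + 1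
        = (Nat.card (SimpleGraph.fromEdgeSet Z').ConnectedComponent : ℝ) := by
      exact_mod_cast congrArg (Nat.cast : ℕ → ℝ) hcount
    linarith
  · rintro x ⟨T, ⟨hTH, ht⟩, rfl⟩
    have hlow := key_lower (H := augGraph G m) (Z := Z') hTH ht
    rw [hwt T]
    have hc : (Nat.card (SimpleGraph.fromEdgeSet Z').ConnectedComponent : ℝ)
        ≤ (Nat.card ↥(T.edgeSet \ Z') : ℝ) + 1 := by exact_mod_cast hlow
    linarith
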